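/- Let m, n be positive integers, ρ a positive divisor of 2mn - 2, and ω = exp(2πi/ρ). Then the limit as q → ω of qbinom_{q²}((m+1)n - 1, n) (the Gaussian binomial in the variable q²) equals C(⌊2((m+1)n-1)/ρ⌋, ⌊2n/ρ⌋) if ρ is even, and equals C(⌊((m+1)n-1)/ρ⌋, ⌊n/ρ⌋) if ρ is odd. -/

import Mathlib

open Filter Topology

/-- The `q`-integer `[k]_q = 1 + q + ⋯ + q^{k-1}`. -/
noncomputable def qInt (q : ℂ) (k : ℕ) : ℂ := ∑ i ∈ Finset.range k, q ^ i

/-- The `q`-factorial `[k]_q!`. -/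
noncomputable def qFact (q : ℂ) : ℕ → ℂ
  | 0 => 1
  | k + 1 => qFact q k * qInt q (k + 1)

/-- The Gaussian binomial coefficient `qbinom(M, r) = [M]_q! / ([r]_q! [M-r]_q!)`. -/
noncomputable def qBinom (q : ℂ) (M r : ℕ) : ℂ :=
  qFact q M / (qFact q r * qFact q (M - r))

lemma qFact_eq_prod (q : ℂ) (k : ℕ) : qFact q k = ∏ i ∈ Finset.range k, qInt q (i+1) := by
  induction k with
  | zero => simp [qFact]
  | succ k ih => rw [qFact, ih, Finset.prod_range_succ]

lemma qInt_eq (q : ℂ) (hq : q ≠ 1) (k : ℕ) : qInt q k = (1 - q^k)/(1 - q) := by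
  rw [qInt, geom_sum_eq hq]
  rw [div_eq_div_iff (sub_ne_zero.mpr hq) (sub_ne_zero.mpr (fun h => hq h.symm))]
  ring

lemma prodIte (g : ℕ → ℂ) (d : ℕ) :
    ∀ n, (∏ i ∈ Finset.range n, if d ∣ (i+1) then g ((i+1)/d) else 1)
      = ∏ j ∈ Finset.range (n/d), g (j+1) := by
  intro n
  induction n with
  | zero => simp
  | succ n ih =>
    rw [Finset.prod_range_succ, ih, Nat.succ_div]
    by_cases h : d ∣ n + 1
    · rw [if_pos h, if_pos h, Finset.prod_range_succ]
    · rw [if_neg h, if_neg h, mul_one, add_zero]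

lemma prod_ratio_choose (K : ℕ) : ∀ t : ℕ,
    (∏ j ∈ Finset.range t, ((K+j+1 : ℕ):ℂ)/((j+1:ℕ):ℂ)) = (Nat.choose (K+t) t : ℂ) := by
  intro t
  induction t with
  | zero => simp
  | succ t ih =>
    have h := Nat.add_one_mul_choose_eq (K+t) t
    have h2 : (((K+t).succ * (K+t).choose t : ℕ) : ℂ)
        = (((K+t).succ.choose t.succ * t.succ : ℕ) : ℂ) := by rw [h]
    have ht : ((t+1 : ℕ) : ℂ) ≠ 0 := by exact_mod_cast Nat.succ_ne_zero t
    rw [Finset.prod_range_succ, ih, mul_div_assoc', div_eq_iff ht,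
      show K + (t+1) = K + t + 1 from rfl]
    push_cast at h2 ⊢
    linear_combination h2

lemma div_div_div_same (x y c : ℂ) (hc : c ≠ 0) : (x/c)/(y/c) = x/y := by
  rcases eq_or_ne y 0 with h | h
  · simp [h]
  · field_simp

lemma factor_tendsto (ω : ℂ) (hω : ω ≠ 0) (a b : ℕ) (ha : 0 < a) (hb : 0 < b)
    (hab : ω^(2*a) = ω^(2*b)) :
    Filter.Tendsto (fun q : ℂ => (1 - q^(2*a))/(1 - q^(2*b))) (𝓝[≠] ω)
      (𝓝 (if ω^(2*b) = 1 then ((a:ℂ)/(b:ℂ)) else 1)) := by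
  by_cases h : ω^(2*b) = 1
  · rw [if_pos h]
    have h2a : ω^(2*a) = 1 := hab.trans h
    have hf : HasDerivAt (fun q : ℂ => 1 - q^(2*a)) (-((2*a : ℕ) * ω^(2*a-1))) ω :=
      (hasDerivAt_pow (2*a) ω).const_sub 1
    have hg : HasDerivAt (fun q : ℂ => 1 - q^(2*b)) (-((2*b : ℕ) * ω^(2*b-1))) ω :=
      (hasDerivAt_pow (2*b) ω).const_sub 1
    have hfs := hasDerivAt_iff_tendsto_slope.mp hf
    have hgs := hasDerivAt_iff_tendsto_slope.mp hg
    have hden : -(((2*b : ℕ) : ℂ) * ω^(2*b-1)) ≠ 0 := by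
      apply neg_ne_zero.mpr
      exact mul_ne_zero (by exact_mod_cast Nat.mul_ne_zero two_ne_zero hb.ne') (pow_ne_zero _ hω)
    have hdiv := hfs.div hgs hden
    have hval : -(((2*a : ℕ) : ℂ) * ω^(2*a-1)) / -(((2*b : ℕ) : ℂ) * ω^(2*b-1))
        = (a : ℂ)/(b : ℂ) := by
      have hc : ω^(2*a-1) = ω^(2*b-1) := by
        apply mul_right_cancel₀ hω
        rw [← pow_succ, ← pow_succ, Nat.sub_add_cancel (by omega), Nat.sub_add_cancel (by omega),
          h2a, h]
      rw [hc, neg_div_neg_eq, mul_div_mul_right _ _ (pow_ne_zero _ hω)]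
      push_cast
      rw [mul_div_mul_left _ _ two_ne_zero]
    rw [← hval]
    apply hdiv.congr'
    filter_upwards [self_mem_nhdsWithin] with q hq
    have hqω : q - ω ≠ 0 := sub_ne_zero.mpr hq
    show slope (fun q : ℂ => 1 - q ^ (2 * a)) ω q / slope (fun q : ℂ => 1 - q ^ (2 * b)) ω q = _
    rw [slope_def_field, slope_def_field]
    simp only [h2a, h, sub_self, sub_zero]
    exact div_div_div_same _ _ _ hqω
  · rw [if_neg h]
    have hden : (1 : ℂ) - ω^(2*b) ≠ 0 := sub_ne_zero.mpr (fun hh => h hh.symm)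
    have hcont : Filter.Tendsto (fun q : ℂ => (1 - q^(2*a))/(1 - q^(2*b))) (𝓝 ω)
        (𝓝 ((1 - ω^(2*a))/(1 - ω^(2*b)))) := by
      apply Filter.Tendsto.div _ _ hden
      · exact ((continuous_const.sub (continuous_pow (2*a))).tendsto ω)
      · exact ((continuous_const.sub (continuous_pow (2*b))).tendsto ω)
    have hval : (1 - ω^(2*a))/(1 - ω^(2*b)) = 1 := by rw [hab]; exact div_self hden
    have := hcont.mono_left (nhdsWithin_le_nhds (s := {ω}ᶜ))
    rwa [hval] at this

lemma qBinom_eq_prod (Q : ℂ) (M n : ℕ) (hMn : n ≤ M) (hM : 1 ≤ M)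
    (hQ : ∀ k, 1 ≤ k → k ≤ M → Q^k ≠ 1) :
    qBinom Q M n = ∏ i ∈ Finset.range n, (1 - Q^(M - n + i + 1))/(1 - Q^(i+1)) := by
  have hQ1 : Q ≠ 1 := fun h => hQ 1 le_rfl hM (by rw [h, one_pow])
  have h1Q : (1 : ℂ) - Q ≠ 0 := sub_ne_zero.mpr (fun h => hQ1 h.symm)
  have hne : ∀ k, 1 ≤ k → k ≤ M → qInt Q k ≠ 0 := by
    intro k h1 h2
    rw [qInt_eq Q hQ1]
    exact div_ne_zero (sub_ne_zero.mpr (fun hh => hQ k h1 h2 hh.symm)) h1Q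
  set s := M - n with hs
  have hsM : s + n = M := Nat.sub_add_cancel hMn
  have hsplit : qFact Q M = (∏ i ∈ Finset.range s, qInt Q (i+1)) *
      ∏ i ∈ Finset.range n, qInt Q (s + i + 1) := by
    rw [qFact_eq_prod, ← hsM, Finset.prod_range_add]
  have hA : (∏ i ∈ Finset.range s, qInt Q (i+1)) ≠ 0 := by
    apply Finset.prod_ne_zero_iff.mpr
    intro i hi
    exact hne (i+1) (by omega) (by have := Finset.mem_range.mp hi; omega)
  rw [qBinom, hsplit, qFact_eq_prod Q n, qFact_eq_prod Q (M - n), ← hs]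
  rw [show ((∏ i ∈ Finset.range s, qInt Q (i+1)) * ∏ i ∈ Finset.range n, qInt Q (s + i + 1)) /
      ((∏ i ∈ Finset.range n, qInt Q (i+1)) * ∏ i ∈ Finset.range s, qInt Q (i+1)) =
      (∏ i ∈ Finset.range n, qInt Q (s + i + 1)) / (∏ i ∈ Finset.range n, qInt Q (i+1)) by
    rw [mul_comm (∏ i ∈ Finset.range n, qInt Q (i+1)) _, mul_div_mul_left _ _ hA]]
  rw [← Finset.prod_div_distrib]
  apply Finset.prod_congr rfl
  intro i hi
  rw [qInt_eq Q hQ1, qInt_eq Q hQ1, div_div_div_same _ _ _ h1Q]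

lemma eventually_good (ω : ℂ) (M : ℕ) :
    ∀ᶠ q : ℂ in 𝓝[≠] ω, ∀ k, 1 ≤ k → k ≤ M → (q^2)^k ≠ 1 := by
  have hNpos : 0 < 2 * Nat.factorial M := by positivity
  have hfin : ({q : ℂ | q ^ (2 * Nat.factorial M) = 1}).Finite := by
    have hsub : {q : ℂ | q ^ (2 * Nat.factorial M) = 1} ⊆
        {x : ℂ | Polynomial.IsRoot (Polynomial.X ^ (2 * Nat.factorial M)
          - Polynomial.C (1:ℂ)) x} := by
      intro q hq
      simp only [Set.mem_setOf_eq] at hq ⊢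
      simp only [Polynomial.IsRoot, Polynomial.eval_sub, Polynomial.eval_pow,
        Polynomial.eval_X, Polynomial.eval_C]
      rw [hq]; ring
    exact Set.Finite.subset (Polynomial.finite_setOf_isRoot
      (Polynomial.X_pow_sub_C_ne_zero hNpos 1)) hsub
  have h1 : ∀ᶠ q : ℂ in 𝓝 ω, q ∉ {q : ℂ | q ^ (2 * Nat.factorial M) = 1} \ {ω} := by
    have hcl := (hfin.diff (t := {ω})).isClosed
    exact hcl.isOpen_compl.mem_nhds (by simp)
  filter_upwards [eventually_nhdsWithin_of_eventually_nhds h1, self_mem_nhdsWithin]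
    with q hq hq2 k hk1 hk2 hcon
  apply hq
  constructor
  · show q ^ (2 * Nat.factorial M) = 1
    have h2k : q ^ (2 * k) = 1 := by rw [pow_mul]; exact hcon
    obtain ⟨c, hc⟩ : 2 * k ∣ 2 * Nat.factorial M :=
      Nat.mul_dvd_mul_left 2 (Nat.dvd_factorial (by omega) hk2)
    rw [hc, pow_mul, h2k, one_pow]
  · exact hq2

/-- Let `m, n` be positive integers, `ρ` a positive divisor of `2mn - 2`, and
`ω = exp(2πi/ρ)`.  Then the limit as `q → ω` of `qbinom_{q²}((m+1)n - 1, n)` equals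
`C(⌊2((m+1)n-1)/ρ⌋, ⌊2n/ρ⌋)` if `ρ` is even, and `C(⌊((m+1)n-1)/ρ⌋, ⌊n/ρ⌋)` if `ρ` is odd. -/
theorem stmt11 (m n ρ : ℕ) (hm : 0 < m) (hn : 0 < n) (hρ : 0 < ρ)
    (hdvd : ρ ∣ 2 * m * n - 2) :
    Tendsto (fun q : ℂ => qBinom (q ^ 2) ((m + 1) * n - 1) n)
      (𝓝[≠] (Complex.exp (2 * (Real.pi : ℂ) * Complex.I / (ρ : ℂ))))
      (𝓝 (if ρ % 2 = 0 then
            (Nat.choose (2 * ((m + 1) * n - 1) / ρ) (2 * n / ρ) : ℂ)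
          else (Nat.choose (((m + 1) * n - 1) / ρ) (n / ρ) : ℂ))) := by
  have hmn : 1 ≤ m * n := Nat.one_le_iff_ne_zero.mpr (Nat.mul_ne_zero hm.ne' hn.ne')
  set M := (m + 1) * n - 1 with hM
  have hM' : M = m * n + n - 1 := by rw [hM, show (m+1)*n = m*n + n from by ring]
  have hMn : n ≤ M := by omega
  have hM1 : 1 ≤ M := by omega
  set s := M - n with hs
  have hseq : s = m * n - 1 := by omega
  have hdvd' : ρ ∣ 2 * (m * n) - 2 := by
    rwa [show 2 * (m * n) = 2 * m * n from by ring]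
  have hρ2s : ρ ∣ 2 * s := by
    have : 2 * (m * n) - 2 = 2 * s := by omega
    rwa [this] at hdvd'
  set ω := Complex.exp (2 * (Real.pi : ℂ) * Complex.I / (ρ : ℂ)) with hωdef
  have hprim : IsPrimitiveRoot ω ρ := Complex.isPrimitiveRoot_exp ρ hρ.ne'
  have hω0 : ω ≠ 0 := Complex.exp_ne_zero _
  have hone : ∀ k : ℕ, (ω ^ k = 1 ↔ ρ ∣ k) := fun k => hprim.pow_eq_one_iff_dvd k
  set d := if ρ % 2 = 0 then ρ / 2 else ρ with hd
  have hdpos : 0 < d := by rw [hd]; split <;> omega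
  have hiff : ∀ b : ℕ, (ρ ∣ 2 * b ↔ d ∣ b) := by
    intro b
    by_cases hpar : ρ % 2 = 0
    · rw [hd, if_pos hpar]
      have hρ2 : ρ = 2 * (ρ / 2) := by omega
      constructor
      · intro h
        rw [hρ2] at h
        exact (Nat.mul_dvd_mul_iff_left two_pos).mp h
      · intro h
        rw [hρ2]
        exact Nat.mul_dvd_mul_left 2 h
    · rw [hd, if_neg hpar]
      constructor
      · intro h
        have hcop : Nat.Coprime ρ 2 := by
          rw [Nat.coprime_two_right]
          exact Nat.odd_iff.mpr (by omega)
        have h' : ρ ∣ b * 2 := by rwa [mul_comm] at h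
        exact hcop.dvd_of_dvd_mul_right h'
      · exact fun h => h.mul_left 2
  obtain ⟨K, hK⟩ : d ∣ s := (hiff s).mp hρ2s
  have hd0 : (d : ℂ) ≠ 0 := by exact_mod_cast hdpos.ne'
  have hkey : Tendsto (fun q : ℂ => ∏ i ∈ Finset.range n,
      (1 - (q^2)^(s+i+1))/(1 - (q^2)^(i+1))) (𝓝[≠] ω)
      (𝓝 (∏ i ∈ Finset.range n, if ω^(2*(i+1)) = 1
        then (((s+i+1 : ℕ)):ℂ)/(((i+1:ℕ)):ℂ) else 1)) := by
    apply tendsto_finset_prod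
    intro i _
    have hab : ω^(2*(s+i+1)) = ω^(2*(i+1)) := by
      rw [show 2*(s+i+1) = 2*s + 2*(i+1) from by ring, pow_add, (hone (2*s)).mpr hρ2s, one_mul]
    have := factor_tendsto ω hω0 (s+i+1) (i+1) (by omega) (by omega) hab
    simpa only [pow_mul] using this
  have heq : (fun q : ℂ => ∏ i ∈ Finset.range n, (1 - (q^2)^(s+i+1))/(1 - (q^2)^(i+1)))
      =ᶠ[𝓝[≠] ω] (fun q : ℂ => qBinom (q^2) M n) := by
    filter_upwards [eventually_good ω M] with q hq
    rw [qBinom_eq_prod (q^2) M n hMn hM1 hq, ← hs]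
  have hmain := hkey.congr' heq
  have hprod : (∏ i ∈ Finset.range n, if ω^(2*(i+1)) = 1
      then (((s+i+1 : ℕ)):ℂ)/(((i+1:ℕ)):ℂ) else 1)
      = (Nat.choose (K + n / d) (n / d) : ℂ) := by
    have hstep : ∀ i ∈ Finset.range n,
        (if ω^(2*(i+1)) = 1 then (((s+i+1 : ℕ)):ℂ)/(((i+1:ℕ)):ℂ) else 1)
        = (if d ∣ (i+1) then (((K + (i+1)/d : ℕ)):ℂ)/((((i+1)/d : ℕ)):ℂ) else 1) := by
      intro i _
      have hiffi : (ω^(2*(i+1)) = 1) ↔ (d ∣ (i+1)) := (hone _).trans (hiff _)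
      by_cases hdi : d ∣ i + 1
      · rw [if_pos (hiffi.mpr hdi), if_pos hdi]
        obtain ⟨u, hu⟩ := hdi
        have h1 : s + i + 1 = d * (K + u) := by
          have := Nat.mul_add d K u
          omega
        have h2 : (i+1)/d = u := by rw [hu, Nat.mul_div_cancel_left _ hdpos]
        rw [h1, h2, hu]
        push_cast
        rw [mul_div_mul_left _ _ hd0]
      · rw [if_neg (fun hh => hdi (hiffi.mp hh)), if_neg hdi]
    rw [Finset.prod_congr rfl hstep,
      prodIte (fun j => (((K + j : ℕ)):ℂ)/(((j:ℕ)):ℂ)) d n]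
    exact prod_ratio_choose K (n/d)
  rw [hprod] at hmain
  convert hmain using 2
  have hMnd : M / d = K + n / d := by
    rw [show M = n + d * K from by omega, Nat.add_mul_div_left n K hdpos, Nat.add_comm]
  by_cases hpar : ρ % 2 = 0
  · rw [if_pos hpar]
    have hρd : ρ = 2 * d := by rw [hd, if_pos hpar]; omega
    rw [hρd, Nat.mul_div_mul_left M d two_pos, Nat.mul_div_mul_left n d two_pos, hMnd]
  · rw [if_neg hpar]
    have hρd : ρ = d := by rw [hd, if_neg hpar]
    rw [hρd, hMnd]
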